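/- Let H be an inner product space, x_1,…,x_n ∈ H, and k_{ij} > 0 for 1 ≤ i < j ≤ n with ‖x_i‖·‖x_j‖ − Re⟨x_i, x_j⟩ ≤ k_{ij}. Then 0 ≤ ∑_{i=1}^n ‖x_i‖ − ‖∑_{i=1}^n x_i‖ ≤ √2 · (∑_{1 ≤ i < j ≤ n} k_{ij})^{1/2}. -/

import Mathlib

theorem stmt_6 {𝕜 H : Type*} [RCLike 𝕜] [NormedAddCommGroup H] [InnerProductSpace 𝕜 H]
    (n : ℕ) (x : ℕ → H) (k : ℕ → ℕ → ℝ)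
    (hk : ∀ i ∈ Finset.Icc 1 n, ∀ j ∈ Finset.Icc 1 n, i < j → 0 < k i j)
    (h : ∀ i ∈ Finset.Icc 1 n, ∀ j ∈ Finset.Icc 1 n, i < j →
      ‖x i‖ * ‖x j‖ - RCLike.re (inner 𝕜 (x i) (x j) : 𝕜) ≤ k i j) :
    0 ≤ (∑ i ∈ Finset.Icc 1 n, ‖x i‖) - ‖∑ i ∈ Finset.Icc 1 n, x i‖ ∧
      (∑ i ∈ Finset.Icc 1 n, ‖x i‖) - ‖∑ i ∈ Finset.Icc 1 n, x i‖ ≤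
        Real.sqrt 2 * Real.sqrt (∑ i ∈ Finset.Icc 1 n, ∑ j ∈ Finset.Icc 1 n,
          (if i < j then k i j else 0)) := by
  classical
  set s := Finset.Icc 1 n with hs
  set f : ℕ → ℕ → ℝ := fun i j => ‖x i‖ * ‖x j‖ - RCLike.re (inner 𝕜 (x i) (x j) : 𝕜) with hf
  set S := ∑ i ∈ s, ‖x i‖ with hS
  set N := ‖∑ i ∈ s, x i‖ with hNdef
  set K := ∑ i ∈ s, ∑ j ∈ s, (if i < j then k i j else 0) with hKdef
  have hNn : 0 ≤ N := norm_nonneg _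
  have htri : N ≤ S := norm_sum_le _ _
  have hK : 0 ≤ K := Finset.sum_nonneg fun i hi => Finset.sum_nonneg fun j hj => by
    split
    · exact (hk i hi j hj (by assumption)).le
    · exact le_refl 0
  -- N^2 as double sum of real parts of inner products
  have hN2 : N ^ 2 = ∑ i ∈ s, ∑ j ∈ s, RCLike.re (inner 𝕜 (x i) (x j) : 𝕜) := by
    rw [hNdef, ← @inner_self_eq_norm_sq 𝕜, sum_inner]
    rw [map_sum]
    refine Finset.sum_congr rfl fun i _ => ?_
    rw [inner_sum, map_sum]
  have hS2 : S ^ 2 = ∑ i ∈ s, ∑ j ∈ s, ‖x i‖ * ‖x j‖ := by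
    rw [hS, sq, Finset.sum_mul_sum]
  have hsplit : ∀ i j : ℕ, f i j =
      (if i < j then f i j else 0) + (if j < i then f i j else 0) +
        (if i = j then f i j else 0) := by
    intro i j
    rcases lt_trichotomy i j with h1 | h1 | h1
    · simp [h1, not_lt.mpr h1.le, h1.ne]
    · simp [h1]
    · simp [h1, not_lt.mpr h1.le, h1.ne']
  have hfsymm : ∀ i j, f i j = f j i := by
    intro i j
    simp only [hf]
    rw [← inner_conj_symm (x i) (x j), RCLike.conj_re]
    ring
  have hdiag : ∀ i, f i i = 0 := by
    intro i
    simp only [hf, @inner_self_eq_norm_sq 𝕜]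
    ring
  have key : S ^ 2 - N ^ 2 = 2 * ∑ i ∈ s, ∑ j ∈ s, (if i < j then f i j else 0) := by
    have : S ^ 2 - N ^ 2 = ∑ i ∈ s, ∑ j ∈ s, f i j := by
      rw [hS2, hN2, ← Finset.sum_sub_distrib]
      refine Finset.sum_congr rfl fun i _ => ?_
      rw [← Finset.sum_sub_distrib]
    rw [this]
    have h2 : ∑ i ∈ s, ∑ j ∈ s, f i j =
        (∑ i ∈ s, ∑ j ∈ s, (if i < j then f i j else 0)) +
        (∑ i ∈ s, ∑ j ∈ s, (if j < i then f i j else 0)) +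
        (∑ i ∈ s, ∑ j ∈ s, (if i = j then f i j else 0)) := by
      rw [← Finset.sum_add_distrib, ← Finset.sum_add_distrib]
      refine Finset.sum_congr rfl fun i _ => ?_
      rw [← Finset.sum_add_distrib, ← Finset.sum_add_distrib]
      exact Finset.sum_congr rfl fun j _ => hsplit i j
    have h3 : (∑ i ∈ s, ∑ j ∈ s, (if j < i then f i j else 0)) =
        ∑ i ∈ s, ∑ j ∈ s, (if i < j then f i j else 0) := by
      rw [Finset.sum_comm]
      refine Finset.sum_congr rfl fun i _ => Finset.sum_congr rfl fun j _ => ?_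
      rw [hfsymm i j]
    have h4 : (∑ i ∈ s, ∑ j ∈ s, (if i = j then f i j else 0)) = 0 := by
      refine Finset.sum_eq_zero fun i _ => Finset.sum_eq_zero fun j _ => ?_
      split
      · rename_i hij; rw [hij, hdiag]
      · rfl
    rw [h2, h3, h4]; ring
  have hle : S ^ 2 - N ^ 2 ≤ 2 * K := by
    rw [key]
    have : (∑ i ∈ s, ∑ j ∈ s, (if i < j then f i j else 0)) ≤ K := by
      refine Finset.sum_le_sum fun i hi => Finset.sum_le_sum fun j hj => ?_
      split
      · exact h i hi j hj (by assumption)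
      · exact le_refl 0
    linarith
  refine ⟨by linarith, ?_⟩
  have hsq : (S - N) ^ 2 ≤ 2 * K := by nlinarith
  calc S - N = Real.sqrt ((S - N) ^ 2) := (Real.sqrt_sq (by linarith)).symm
    _ ≤ Real.sqrt (2 * K) := Real.sqrt_le_sqrt hsq
    _ = Real.sqrt 2 * Real.sqrt K := Real.sqrt_mul (by norm_num) _
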